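/- Let p ≥ 3 be a prime, τ ≥ 0 an integer, and k = p^τ(p−1). Given a_1, …, a_p in 𝔽_p all nonzero, there exist x_1, …, x_p in 𝔽_p with x_1 = 1 and a_1 x_1^k + ⋯ + a_p x_p^k = 0. -/

import Mathlib

theorem stmt_2 (p : ℕ) (hp : p.Prime) (hp3 : 3 ≤ p) (τ k : ℕ)
    (hk : k = p ^ τ * (p - 1)) (a : Fin p → ZMod p) (ha : ∀ j, a j ≠ 0) :
    ∃ x : Fin p → ZMod p, x ⟨0, by omega⟩ = 1 ∧ ∑ j, a j * x j ^ k = 0 := by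
  haveI : Fact p.Prime := ⟨hp⟩
  -- orbit lemma: a nonempty finset closed under adding a nonzero element is everything
  have orbit : ∀ (T : Finset (ZMod p)) (b : ZMod p), b ≠ 0 →
      (∀ x ∈ T, x + b ∈ T) → T.Nonempty → T = Finset.univ := by
    rintro T b hb hcl ⟨t, ht⟩
    have key : ∀ n : ℕ, t + n • b ∈ T := by
      intro n; induction n with
      | zero => simpa using ht
      | succ n ih =>
        have := hcl _ ih
        rw [succ_nsmul, ← add_assoc]
        exact this
    apply Finset.eq_univ_of_forall
    intro z
    have hz : z = t + (((z - t) * b⁻¹).val : ℕ) • b := by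
      rw [nsmul_eq_mul, ZMod.natCast_val, ZMod.cast_id]
      field_simp
      ring
    rw [hz]; exact key _
  set R : Finset (Fin p) → Finset (ZMod p) :=
    fun s => s.powerset.image (fun t => ∑ j ∈ t, a j) with hRdef
  have hmem0 : ∀ s, (0 : ZMod p) ∈ R s := by
    intro s
    exact Finset.mem_image.2 ⟨∅, by simp⟩
  have hcardZ : Fintype.card (ZMod p) = p := ZMod.card p
  have hcard : ∀ s : Finset (Fin p), min (s.card + 1) p ≤ (R s).card := by
    intro s
    induction s using Finset.induction_on with
    | empty =>
      have : (0 : ZMod p) ∈ R ∅ := hmem0 ∅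
      have h1 : 1 ≤ (R ∅).card := Finset.card_pos.2 ⟨0, this⟩
      simpa using le_trans (min_le_left _ _) h1
    | @insert i s hi ih =>
      have hsub : R s ⊆ R (insert i s) := by
        apply Finset.image_subset_image
        exact Finset.powerset_mono.2 (Finset.subset_insert i s)
      have hshift : ∀ x ∈ R s, x + a i ∈ R (insert i s) := by
        intro x hx
        obtain ⟨t, ht, rfl⟩ := Finset.mem_image.1 hx
        rw [Finset.mem_powerset] at ht
        refine Finset.mem_image.2 ⟨insert i t, ?_, ?_⟩
        · exact Finset.mem_powerset.2 (Finset.insert_subset_insert i ht)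
        · rw [Finset.sum_insert (fun hit => hi (ht hit)), add_comm]
      by_cases hfull : R s = Finset.univ
      · have : p ≤ (R (insert i s)).card := by
          calc p = (R s).card := by rw [hfull, Finset.card_univ, hcardZ]
          _ ≤ _ := Finset.card_le_card hsub
        exact le_trans (min_le_right _ _) this
      · -- there is x ∈ R s with x + a i ∉ R s
        have hne : ∃ x ∈ R s, x + a i ∉ R s := by
          by_contra h
          push_neg at h
          exact hfull (orbit (R s) (a i) (ha i) h ⟨0, hmem0 s⟩)
        obtain ⟨x, hx, hxn⟩ := hne
        have hlt : (R s).card < p := by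
          have hle : (R s).card ≤ p :=
            le_trans (Finset.card_le_univ _) hcardZ.le
          rcases lt_or_eq_of_le hle with h | h
          · exact h
          · exact absurd (Finset.eq_univ_of_card _ (by rw [h, hcardZ])) hfull
        have hsub2 : insert (x + a i) (R s) ⊆ R (insert i s) := by
          intro y hy
          rcases Finset.mem_insert.1 hy with rfl | hy
          · exact hshift x hx
          · exact hsub hy
        have h2 : (R s).card + 1 ≤ (R (insert i s)).card := by
          calc (R s).card + 1 = (insert (x + a i) (R s)).card :=
                (Finset.card_insert_of_notMem hxn).symm
          _ ≤ _ := Finset.card_le_card hsub2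
        rw [Finset.card_insert_of_notMem hi]
        omega
  -- apply to s = univ.erase 0
  have h0p : (0 : ℕ) < p := by omega
  set i0 : Fin p := ⟨0, h0p⟩ with hi0
  have hcarderase : (Finset.univ.erase i0).card = p - 1 := by
    rw [Finset.card_erase_of_mem (Finset.mem_univ _), Finset.card_univ, Fintype.card_fin]
  have hRuniv : R (Finset.univ.erase i0) = Finset.univ := by
    apply Finset.eq_univ_of_card
    have := hcard (Finset.univ.erase i0)
    rw [hcarderase] at this
    have hp1 : p - 1 + 1 = p := by omega
    rw [hp1, min_self] at this
    have hle : (R (Finset.univ.erase i0)).card ≤ p :=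
      le_trans (Finset.card_le_univ _) hcardZ.le
    rw [hcardZ]; omega
  have hmem : (-(a i0)) ∈ R (Finset.univ.erase i0) := by
    rw [hRuniv]; exact Finset.mem_univ _
  obtain ⟨t, ht, hts⟩ := Finset.mem_image.1 hmem
  rw [Finset.mem_powerset] at ht
  have hi0t : i0 ∉ t := fun h => (Finset.mem_erase.1 (ht h)).1 rfl
  -- define x
  refine ⟨fun j => if j ∈ insert i0 t then 1 else 0, by simp, ?_⟩
  have hk0 : k ≠ 0 := by
    rw [hk]
    have : p - 1 ≠ 0 := by omega
    positivity
  have hterm : ∀ j : Fin p,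
      a j * (if j ∈ insert i0 t then (1 : ZMod p) else 0) ^ k
        = if j ∈ insert i0 t then a j else 0 := by
    intro j
    by_cases hj : j ∈ insert i0 t <;> simp [hj, zero_pow hk0]
  calc ∑ j, a j * (if j ∈ insert i0 t then (1 : ZMod p) else 0) ^ k
      = ∑ j, if j ∈ insert i0 t then a j else 0 := by
        exact Finset.sum_congr rfl fun j _ => hterm j
    _ = ∑ j ∈ insert i0 t, a j := by
        rw [Finset.sum_ite_mem, Finset.univ_inter]
    _ = a i0 + ∑ j ∈ t, a j := Finset.sum_insert hi0t
    _ = 0 := by rw [hts]; ring
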